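/- Every forest on n vertices has at most 2^{n/2} perfect codes, with equality for disjoint unions of edges. -/

import Mathlib

/-- `D` is a perfect code of `G`: no vertex of `D` has a neighbor in `D`, and every
vertex not in `D` has exactly one neighbor in `D`. -/
def IsPerfectCode {V : Type*} (G : SimpleGraph V) (D : Set V) : Prop :=
  (∀ v ∈ D, (G.neighborSet v ∩ D).ncard = 0) ∧
    ∀ v ∉ D, (G.neighborSet v ∩ D).ncard = 1

/-- The disjoint union of `k` edges (copies of `K₂`). -/
def matchingGraph (k : ℕ) : SimpleGraph (Fin k × Bool) :=
  SimpleGraph.fromRel (fun a b => a.1 = b.1)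

open SimpleGraph Set

set_option linter.unusedSectionVars false
set_option linter.unnecessarySimpa false

lemma exists_leaf {V : Type} [Fintype V] {G : SimpleGraph V} (hG : G.IsAcyclic)
    (hedge : ∃ a b, G.Adj a b) : ∃ v u : V, G.neighborSet v = {u} := by
  classical
  obtain ⟨a, b, hab⟩ := hedge
  set S : Set ℕ := {n | ∃ (v w : V) (p : G.Walk v w), p.IsPath ∧ p.length = n} with hSdef
  have h1 : 1 ∈ S := ⟨a, b, Walk.cons hab Walk.nil, by simp [hab.ne], rfl⟩
  have hbdd : BddAbove S := ⟨Fintype.card V, by rintro n ⟨v, w, p, hp, rfl⟩; exact hp.length_lt.le⟩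
  obtain ⟨v, w, p, hp, hlen⟩ := Nat.sSup_mem ⟨1, h1⟩ hbdd
  have hmax : ∀ m ∈ S, m ≤ p.length := by intro m hm; rw [hlen]; exact le_csSup hbdd hm
  have hpos : 1 ≤ p.length := hmax 1 h1
  have key : ∀ x, G.Adj v x → p.support.tail.head? = some x := by
    intro x hx
    by_cases hxs : x ∈ p.support
    · have ht : (p.takeUntil x hxs).IsPath := hp.takeUntil hxs
      have hun : (⟨p.takeUntil x hxs, ht⟩ : G.Path v x) = Path.singleton hx :=
        hG.path_unique _ _
      have htw : p.takeUntil x hxs = Walk.cons hx Walk.nil := congrArg Subtype.val hun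
      have hsp : p.support = [v, x] ++ (p.dropUntil x hxs).support.tail := by
        conv_lhs => rw [← p.take_spec hxs]
        rw [Walk.support_append, htw]
        rfl
      rw [hsp]; rfl
    · exfalso
      have hmem : p.length + 1 ∈ S :=
        ⟨x, w, Walk.cons hx.symm p, by simp [Walk.cons_isPath_iff, hp, hxs], by simp⟩
      have := hmax _ hmem
      omega
  clear hmax hlen hp h1 hbdd hSdef
  revert key hpos
  cases p with
  | nil => intro hpos _; simp at hpos
  | @cons _ u _ h q =>
    intro _ key
    refine ⟨v, u, ?_⟩
    ext x
    simp only [mem_neighborSet, mem_singleton_iff]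
    constructor
    · intro hx
      have hk := key x hx
      rw [Walk.support_cons, List.tail_cons, q.support_eq_cons] at hk
      simp only [List.head?_cons, Option.some.injEq] at hk
      exact hk.symm
    · rintro rfl; exact h

section Aux
variable {V : Type} [Fintype V] {G : SimpleGraph V}

lemma no_edge_case (h : ∀ a b : V, ¬ G.Adj a b) :
    {D : Set V | IsPerfectCode G D} = {Set.univ} := by
  ext D
  simp only [Set.mem_setOf_eq, Set.mem_singleton_iff]
  constructor
  · rintro ⟨h0, h1⟩
    ext v; simp only [Set.mem_univ, iff_true]
    by_contra hv
    have h2 := h1 v hv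
    rw [Set.ncard_eq_one] at h2
    obtain ⟨z, hz⟩ := h2
    have : z ∈ G.neighborSet v ∩ D := by rw [hz]; rfl
    exact h v z this.1
  · rintro rfl
    refine ⟨fun v _ => ?_, fun v hv => absurd (Set.mem_univ v) hv⟩
    rw [Set.ncard_eq_zero, Set.eq_empty_iff_forall_notMem]
    rintro z ⟨hz, _⟩; exact h v z hz

lemma code_no_nb {D : Set V} (hD : IsPerfectCode G D) {w : V} (hw : w ∈ D) :
    ∀ x, G.Adj w x → x ∉ D := by
  intro x hadj hxD
  have h0 := hD.1 w hw
  rw [Set.ncard_eq_zero] at h0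
  rw [Set.eq_empty_iff_forall_notMem] at h0
  exact h0 x ⟨hadj, hxD⟩

lemma code_restrict {D : Set V} (hD : IsPerfectCode G D) {w : V} (hw : w ∈ D) :
    IsPerfectCode (G.induce {x : V | ¬ G.Adj w x ∧ x ≠ w}) (Subtype.val ⁻¹' D) := by
  have hnb := code_no_nb hD hw
  constructor
  · intro a ha
    rw [Set.ncard_eq_zero, Set.eq_empty_iff_forall_notMem]
    rintro b ⟨hadj, hbD⟩
    have hGadj : G.Adj ↑a ↑b := hadj
    have h0 := hD.1 ↑a ha
    rw [Set.ncard_eq_zero, Set.eq_empty_iff_forall_notMem] at h0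
    exact h0 ↑b ⟨hGadj, hbD⟩
  · intro a ha
    have h1 := hD.2 ↑a ha
    rw [Set.ncard_eq_one] at h1
    obtain ⟨z, hz⟩ := h1
    have hzmem : z ∈ G.neighborSet ↑a ∩ D := by rw [hz]; rfl
    have hzS : z ∈ {x : V | ¬ G.Adj w x ∧ x ≠ w} := by
      refine ⟨fun hc => hnb z hc hzmem.2, fun hc => ?_⟩
      subst hc
      exact a.2.1 hzmem.1.symm
    rw [Set.ncard_eq_one]
    refine ⟨⟨z, hzS⟩, ?_⟩
    ext b
    simp only [Set.mem_inter_iff, mem_neighborSet, Set.mem_preimage, Set.mem_singleton_iff]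
    constructor
    · rintro ⟨hadj, hbD⟩
      have : (↑b : V) ∈ G.neighborSet ↑a ∩ D := ⟨hadj, hbD⟩
      rw [hz] at this
      exact Subtype.ext this
    · rintro rfl
      exact ⟨hzmem.1, hzmem.2⟩

lemma code_eq_of_restrict_eq {D₁ D₂ : Set V} (h₁ : IsPerfectCode G D₁) (h₂ : IsPerfectCode G D₂)
    {w : V} (hw₁ : w ∈ D₁) (hw₂ : w ∈ D₂)
    (h : (Subtype.val ⁻¹' D₁ : Set {x : V | ¬ G.Adj w x ∧ x ≠ w}) = Subtype.val ⁻¹' D₂) :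
    D₁ = D₂ := by
  ext x
  by_cases hxw : x = w
  · subst hxw; simp [hw₁, hw₂]
  by_cases hxa : G.Adj w x
  · simp [code_no_nb h₁ hw₁ x hxa, code_no_nb h₂ hw₂ x hxa]
  · exact Set.ext_iff.mp h ⟨x, hxa, hxw⟩

lemma acyclic_induce (hG : G.IsAcyclic) (s : Set V) : (G.induce s).IsAcyclic := by
  intro v c hc
  let f : G.induce s ↪g G := SimpleGraph.Embedding.induce s
  exact hG (c.map f.toHom) ((Walk.map_isCycle_iff_of_injective f.injective).mpr hc)

lemma card_compl_bound {v u : V} (hadj : G.Adj v u) (w : V) (hw : w = v ∨ w = u) :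
    ({x : V | ¬ G.Adj w x ∧ x ≠ w} : Set V).ncard + 2 ≤ Fintype.card V := by
  have hsub : ({x : V | ¬ G.Adj w x ∧ x ≠ w} : Set V) ⊆ ({v, u} : Set V)ᶜ := by
    rintro x ⟨hx1, hx2⟩ hx
    rcases hx with rfl | rfl
    · rcases hw with rfl | rfl
      · exact hx2 rfl
      · exact hx1 hadj.symm
    · rcases hw with rfl | rfl
      · exact hx1 hadj
      · exact hx2 rfl
  have h1 : ({v, u} : Set V).ncard + (({v, u} : Set V)ᶜ).ncard = Fintype.card V := by
    rw [Set.ncard_add_ncard_compl, Nat.card_eq_fintype_card]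
  rw [Set.ncard_pair hadj.ne] at h1
  have h2 := Set.ncard_le_ncard hsub (Set.toFinite _)
  omega

end Aux

lemma one_le_pow_half {c : ℕ} : (1:ℝ) ≤ 2 ^ ((c : ℝ) / 2) := by
  calc (1:ℝ) = 2 ^ (0:ℝ) := (Real.rpow_zero 2).symm
    _ ≤ 2 ^ ((c:ℝ)/2) := Real.rpow_le_rpow_of_exponent_le one_le_two (by positivity)

lemma main_bound (n : ℕ) : ∀ (V : Type) [Fintype V] (G : SimpleGraph V), G.IsAcyclic →
    Fintype.card V ≤ n →
    (Set.ncard {D : Set V | IsPerfectCode G D} : ℝ) ≤ 2 ^ ((Fintype.card V : ℝ) / 2) := by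
  induction n with
  | zero =>
    intro V _ G _ hc
    have hE : IsEmpty V := Fintype.card_eq_zero_iff.mp (Nat.le_zero.mp hc)
    rw [no_edge_case (fun a _ _ => hE.elim a)]
    simpa using one_le_pow_half
  | succ n ih =>
    intro V _ G hG hc
    by_cases hedge : ∃ a b, G.Adj a b
    · obtain ⟨v, u, hvu⟩ := exists_leaf hG hedge
      have hadj : G.Adj v u := by
        have : u ∈ G.neighborSet v := by rw [hvu]; rfl
        exact this
      -- split codes
      have hsplit : {D : Set V | IsPerfectCode G D} ⊆
          {D : Set V | IsPerfectCode G D ∧ v ∈ D} ∪ {D : Set V | IsPerfectCode G D ∧ u ∈ D} := by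
        intro D hD
        by_cases hv : v ∈ D
        · exact Or.inl ⟨hD, hv⟩
        · refine Or.inr ⟨hD, ?_⟩
          have h1 := hD.2 v hv
          rw [Set.ncard_eq_one] at h1
          obtain ⟨z, hz⟩ := h1
          have hzm : z ∈ G.neighborSet v ∩ D := by rw [hz]; rfl
          have : z = u := by
            have h2 := hzm.1
            rw [hvu] at h2
            exact h2
          exact this ▸ hzm.2
      -- count codes containing w, for w = v or u
      have hcount : ∀ w : V, w = v ∨ w = u →
          (Set.ncard {D : Set V | IsPerfectCode G D ∧ w ∈ D} : ℝ) ≤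
            2 ^ ((Fintype.card V : ℝ) / 2) / 2 := by
        intro w hw
        set S : Set V := {x : V | ¬ G.Adj w x ∧ x ≠ w} with hSdef
        haveI : Fintype ↥S := Fintype.ofFinite ↥S
        have hScard : Fintype.card ↥S = S.ncard := by
          rw [← Nat.card_coe_set_eq, Nat.card_eq_fintype_card]
        have hSb : S.ncard + 2 ≤ Fintype.card V := card_compl_bound hadj w hw
        have hinj : {D : Set V | IsPerfectCode G D ∧ w ∈ D}.ncard ≤
            {D' : Set ↥S | IsPerfectCode (G.induce S) D'}.ncard := by
          apply Set.ncard_le_ncard_of_injOn (fun D => Subtype.val ⁻¹' D)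
          · rintro D ⟨hD, hwD⟩
            exact code_restrict hD hwD
          · rintro D₁ ⟨h₁, hw₁⟩ D₂ ⟨h₂, hw₂⟩ h
            exact code_eq_of_restrict_eq h₁ h₂ hw₁ hw₂ h
        have hIH := ih ↥S (G.induce S) (acyclic_induce hG S) (by omega)
        have hexp : (2:ℝ) ^ ((Fintype.card ↥S : ℝ) / 2) ≤ 2 ^ ((Fintype.card V : ℝ) / 2) / 2 := by
          have heq : (2:ℝ) ^ ((Fintype.card V : ℝ)/2) / 2 = 2 ^ ((Fintype.card V : ℝ)/2 - 1) := by
            rw [Real.rpow_sub (by norm_num), Real.rpow_one]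
          rw [heq]
          apply Real.rpow_le_rpow_of_exponent_le one_le_two
          have : (Fintype.card ↥S : ℝ) + 2 ≤ (Fintype.card V : ℝ) := by
            rw [hScard]; exact_mod_cast hSb
          linarith
        calc (Set.ncard {D : Set V | IsPerfectCode G D ∧ w ∈ D} : ℝ)
            ≤ (Set.ncard {D' : Set ↥S | IsPerfectCode (G.induce S) D'} : ℝ) := by exact_mod_cast hinj
          _ ≤ 2 ^ ((Fintype.card ↥S : ℝ) / 2) := hIH
          _ ≤ 2 ^ ((Fintype.card V : ℝ) / 2) / 2 := hexp
      have hle : ({D : Set V | IsPerfectCode G D}).ncard ≤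
          {D : Set V | IsPerfectCode G D ∧ v ∈ D}.ncard +
            {D : Set V | IsPerfectCode G D ∧ u ∈ D}.ncard :=
        le_trans (Set.ncard_le_ncard hsplit (Set.toFinite _)) (Set.ncard_union_le _ _)
      have hv' := hcount v (Or.inl rfl)
      have hu' := hcount u (Or.inr rfl)
      have : (({D : Set V | IsPerfectCode G D}).ncard : ℝ) ≤
          ({D : Set V | IsPerfectCode G D ∧ v ∈ D}.ncard : ℝ) +
            ({D : Set V | IsPerfectCode G D ∧ u ∈ D}.ncard : ℝ) := by exact_mod_cast hle
      linarith
    · push_neg at hedge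
      rw [no_edge_case hedge]
      simpa using one_le_pow_half

lemma matching_nbhd {k : ℕ} (p : Fin k × Bool) :
    (matchingGraph k).neighborSet p = {(p.1, !p.2)} := by
  obtain ⟨i, b⟩ := p
  ext ⟨j, c⟩
  simp only [mem_neighborSet, matchingGraph, fromRel_adj, Set.mem_singleton_iff,
    Prod.mk.injEq, ne_eq]
  constructor
  · rintro ⟨hne, h | h⟩ <;>
    · subst h
      refine ⟨rfl, ?_⟩
      cases b <;> cases c <;> simp_all
  · rintro ⟨rfl, rfl⟩
    cases b <;> simp_all

lemma singleton_inter_ncard_mem {α : Type*} {x : α} {D : Set α} (h : x ∈ D) :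
    (({x} : Set α) ∩ D).ncard = 1 := by
  rw [Set.inter_eq_self_of_subset_left (by simpa using h), Set.ncard_singleton]

lemma singleton_inter_ncard_not_mem {α : Type*} {x : α} {D : Set α} (h : x ∉ D) :
    (({x} : Set α) ∩ D).ncard = 0 := by
  rw [Set.singleton_inter_eq_empty.mpr h, Set.ncard_empty]

lemma matching_code_iff {k : ℕ} {D : Set (Fin k × Bool)} :
    IsPerfectCode (matchingGraph k) D ↔ ∀ p : Fin k × Bool, (p ∈ D ↔ (p.1, !p.2) ∉ D) := by
  constructor
  · rintro ⟨h0, h1⟩ p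
    constructor
    · intro hp hpart
      have := h0 p hp
      rw [matching_nbhd, singleton_inter_ncard_mem hpart] at this
      exact one_ne_zero this
    · intro hpart
      by_contra hp
      have := h1 p hp
      rw [matching_nbhd, singleton_inter_ncard_not_mem hpart] at this
      exact zero_ne_one this
  · intro h
    constructor
    · intro p hp
      rw [matching_nbhd, singleton_inter_ncard_not_mem ((h p).mp hp)]
    · intro p hp
      rw [matching_nbhd, singleton_inter_ncard_mem ?_]
      by_contra hpart
      exact hp ((h p).mpr hpart)

lemma matching_codes_eq (k : ℕ) : {D : Set (Fin k × Bool) | IsPerfectCode (matchingGraph k) D}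
    = (fun g : Fin k → Bool => {p : Fin k × Bool | p.2 = g p.1}) '' Set.univ := by
  classical
  ext D
  simp only [Set.mem_setOf_eq, Set.image_univ, Set.mem_range, matching_code_iff]
  constructor
  · intro h
    refine ⟨fun i => if (i, true) ∈ D then true else false, ?_⟩
    ext ⟨i, b⟩
    simp only [Set.mem_setOf_eq]
    have h2 := h (i, false)
    simp only [Bool.not_false] at h2
    cases b <;> by_cases ht : (i, true) ∈ D <;> simp [ht, h2]
  · rintro ⟨g, rfl⟩ ⟨i, b⟩
    simp only [Set.mem_setOf_eq, Bool.not_eq]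
    cases b <;> cases hg : g i <;> simp [hg]

lemma matching_count (k : ℕ) :
    Set.ncard {D : Set (Fin k × Bool) | IsPerfectCode (matchingGraph k) D} = 2 ^ k := by
  rw [matching_codes_eq]
  have hinj : Function.Injective (fun g : Fin k → Bool => {p : Fin k × Bool | p.2 = g p.1}) := by
    intro g g' h
    funext i
    have h' : {p : Fin k × Bool | p.2 = g p.1} = {p : Fin k × Bool | p.2 = g' p.1} := h
    have hm : (i, g i) ∈ {p : Fin k × Bool | p.2 = g' p.1} := by
      rw [← h']; exact Set.mem_setOf_eq ▸ rfl
    simpa using hm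
  rw [Set.ncard_image_of_injective _ hinj, Set.ncard_univ, Nat.card_eq_fintype_card]
  simp


theorem forest_perfect_code_bound :
    (∀ (V : Type) [Fintype V] (G : SimpleGraph V), G.IsAcyclic →
      (Set.ncard {D : Set V | IsPerfectCode G D} : ℝ) ≤
        2 ^ ((Fintype.card V : ℝ) / 2)) ∧
    (∀ k : ℕ, Fintype.card (Fin k × Bool) = 2 * k ∧
      Set.ncard {D : Set (Fin k × Bool) | IsPerfectCode (matchingGraph k) D} = 2 ^ k) := by
  refine ⟨fun V _ G hG => main_bound (Fintype.card V) V G hG le_rfl,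
    fun k => ⟨by simp [Nat.mul_comm], matching_count k⟩⟩
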